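/- Let k be a commutative ring and let K be a simplicial complex on the vertex set {1,…,m} that is pure of rank n. Then the restriction homomorphism α : k[x_1,…,x_m] → PP[K̂;k], which sends a polynomial h to the family (h|_σ)_{σ∈K}, is a surjective k-algebra homomorphism whose kernel is exactly the Stanley–Reisner ideal I_K; consequently α induces an isomorphism of k-algebras k[K] = k[x_1,…,x_m]/I_K ≅ PP[K̂;k]. -/

import Mathlib

noncomputable section

open MvPolynomial

/-- Restriction of a polynomial to a face `σ`: substitute `x i = 0` for every `i ∉ σ`. -/
def restrictFace (k : Type*) [CommRing k] {m : ℕ} (σ : Finset (Fin m)) :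
    MvPolynomial (Fin m) k →ₐ[k] MvPolynomial (Fin m) k :=
  aeval (fun i => if i ∈ σ then X i else 0)

/-- `K` is a simplicial complex on the vertex set `{1, …, m}`:
it contains the empty set and is closed under taking subsets. -/
def IsSimplicialComplex {m : ℕ} (K : Set (Finset (Fin m))) : Prop :=
  ∅ ∈ K ∧ ∀ σ ∈ K, ∀ τ, τ ⊆ σ → τ ∈ K

/-- `K` is pure of rank `n`: every face is contained in a face of cardinality `n`. -/
def IsPureOfRank {m : ℕ} (K : Set (Finset (Fin m))) (n : ℕ) : Prop :=
  ∀ σ ∈ K, ∃ τ ∈ K, σ ⊆ τ ∧ τ.card = n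

/-- The Stanley–Reisner ideal of `K`: generated by the squarefree monomials
`∏_{i ∈ S} x i` over the non-faces `S ∉ K`. -/
def stanleyReisnerIdeal (k : Type*) [CommRing k] {m : ℕ} (K : Set (Finset (Fin m))) :
    Ideal (MvPolynomial (Fin m) k) :=
  Ideal.span {p | ∃ S : Finset (Fin m), S ∉ K ∧ p = ∏ i ∈ S, X i}

/-- The algebra `PP[K̂;k]` of piecewise polynomials on the pulled-back fan `K̂`:
families `g = (g_σ)_{σ ∈ K}` with `g σ` supported on the variables of `σ` and
`g τ = (g σ)|_τ` whenever `τ ⊆ σ` in `K`; operations are componentwise. -/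
def PPhat (k : Type*) [CommRing k] {m : ℕ} (K : Set (Finset (Fin m))) :
    Subalgebra k ((σ : K) → MvPolynomial (Fin m) k) :=
  (⨅ σ : K, (MvPolynomial.supported k (((σ : Finset (Fin m)) : Set (Fin m)))).comap
      (Pi.evalAlgHom k (fun _ : K => MvPolynomial (Fin m) k) σ)) ⊓
  ⨅ (σ : K) (τ : K) (_ : (τ : Finset (Fin m)) ⊆ (σ : Finset (Fin m))),
    AlgHom.equalizer (Pi.evalAlgHom k (fun _ : K => MvPolynomial (Fin m) k) τ)
      ((restrictFace k (τ : Finset (Fin m))).comp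
        (Pi.evalAlgHom k (fun _ : K => MvPolynomial (Fin m) k) σ))

/-- The restriction homomorphism `α : k[x_1,…,x_m] → ∏_{σ ∈ K} k[x_1,…,x_m]`,
sending `h` to the family `(h|_σ)_{σ ∈ K}`. -/
def alphaMap (k : Type*) [CommRing k] {m : ℕ} (K : Set (Finset (Fin m))) :
    MvPolynomial (Fin m) k →ₐ[k] ((σ : K) → MvPolynomial (Fin m) k) :=
  Pi.algHom _ _ (fun σ : K => restrictFace k (σ : Finset (Fin m)))

namespace SRAux
variable {k : Type*} [CommRing k] {m : ℕ}

theorem restrictFace_monomial (σ : Finset (Fin m)) (b : Fin m →₀ ℕ) (c : k) :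
    restrictFace k σ (monomial b c) = if b.support ⊆ σ then monomial b c else 0 := by
  classical
  rw [restrictFace, aeval_monomial]
  by_cases hb : b.support ⊆ σ
  · rw [if_pos hb, monomial_eq]
    congr 1
    exact Finset.prod_congr rfl fun i hi => by simp [hb hi]
  · rw [if_neg hb]
    obtain ⟨i, hi, hiσ⟩ := Finset.not_subset.mp hb
    have : (Finsupp.prod b fun i n => (if i ∈ σ then (X i : MvPolynomial (Fin m) k) else 0) ^ n) = 0 := by
      refine Finset.prod_eq_zero hi ?_
      simp [hiσ, zero_pow (Finsupp.mem_support_iff.mp hi)]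
    rw [this, mul_zero]

theorem coeff_restrictFace (σ : Finset (Fin m)) (p : MvPolynomial (Fin m) k) (a : Fin m →₀ ℕ) :
    coeff a (restrictFace k σ p) = if a.support ⊆ σ then coeff a p else 0 := by
  classical
  induction p using MvPolynomial.induction_on' with
  | monomial b c =>
    rw [restrictFace_monomial]
    split_ifs with hb ha ha
    · rfl
    · rw [coeff_monomial, if_neg]; rintro rfl; exact ha hb
    · rw [coeff_zero, coeff_monomial, if_neg]; rintro rfl; exact hb ha
    · exact coeff_zero a
  | add p q hp hq =>
    rw [map_add, coeff_add, hp, hq, coeff_add]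
    split <;> simp

theorem indicator_apply (S : Finset (Fin m)) (j : Fin m) :
    (∑ i ∈ S, Finsupp.single i 1 : Fin m →₀ ℕ) j = if j ∈ S then 1 else 0 := by
  classical
  rw [Finset.sum_apply']
  simp [Finsupp.single_apply, Finset.sum_ite_eq' S j]

theorem indicator_support (S : Finset (Fin m)) :
    (∑ i ∈ S, Finsupp.single i 1 : Fin m →₀ ℕ).support = S := by
  classical
  ext j
  simp [Finsupp.mem_support_iff, indicator_apply]

theorem indicator_le_iff (S : Finset (Fin m)) (a : Fin m →₀ ℕ) :
    (∑ i ∈ S, Finsupp.single i 1 : Fin m →₀ ℕ) ≤ a ↔ S ⊆ a.support := by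
  classical
  constructor
  · intro h j hj
    have := h j
    rw [indicator_apply, if_pos hj] at this
    exact Finsupp.mem_support_iff.mpr (by omega)
  · intro h j
    rw [indicator_apply]
    split_ifs with hj
    · exact Nat.one_le_iff_ne_zero.mpr (Finsupp.mem_support_iff.mp (h hj))
    · exact Nat.zero_le _

theorem prod_X_eq (S : Finset (Fin m)) :
    (∏ i ∈ S, X i : MvPolynomial (Fin m) k) = monomial (∑ i ∈ S, Finsupp.single i 1) 1 := by
  classical
  induction S using Finset.induction_on with
  | empty => simp [monomial_zero']
  | @insert _ _ hS ih =>
    rw [Finset.prod_insert hS, Finset.sum_insert hS, ih, X, monomial_mul, one_mul]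

theorem mem_SR_iff {K : Set (Finset (Fin m))}
    (hdown : ∀ σ ∈ K, ∀ τ, τ ⊆ σ → τ ∈ K) (p : MvPolynomial (Fin m) k) :
    p ∈ stanleyReisnerIdeal k K ↔ ∀ a : Fin m →₀ ℕ, a.support ∈ K → coeff a p = 0 := by
  classical
  constructor
  · intro hp
    refine Submodule.span_induction ?_ ?_ ?_ ?_ hp
    · rintro x ⟨S, hS, rfl⟩ a ha
      rw [prod_X_eq, coeff_monomial, if_neg]
      rintro rfl
      exact hS (hdown _ ha _ (by rw [indicator_support]))
    · simp
    · intro x y _ _ hx hy a ha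
      rw [coeff_add, hx a ha, hy a ha, add_zero]
    · rintro q x _ hx a ha
      rw [smul_eq_mul, coeff_mul]
      refine Finset.sum_eq_zero fun bc hbc => ?_
      have hsum : bc.1 + bc.2 = a := Finset.HasAntidiagonal.mem_antidiagonal.mp hbc
      have hsub : bc.2.support ⊆ a.support := fun j hj => by
        have h2 := Finsupp.mem_support_iff.mp hj
        refine Finsupp.mem_support_iff.mpr ?_
        have : a j = bc.1 j + bc.2 j := by rw [← hsum]; rfl
        omega
      rw [hx bc.2 (hdown _ ha _ hsub), mul_zero]
  · intro h
    rw [← support_sum_monomial_coeff p]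
    refine Submodule.sum_mem _ fun a ha => ?_
    have haK : a.support ∉ K := fun hk => Finsupp.mem_support_iff.mp ha (h a hk)
    set s : Fin m →₀ ℕ := ∑ i ∈ a.support, Finsupp.single i 1 with hs
    have hle : s ≤ a := (indicator_le_iff _ _).mpr le_rfl
    have : monomial a (coeff a p) = monomial (a - s) (coeff a p) * ∏ i ∈ a.support, X i := by
      rw [prod_X_eq, monomial_mul, mul_one, tsub_add_cancel_of_le hle]
    rw [this]
    exact Ideal.mul_mem_left _ _ (Ideal.subset_span ⟨a.support, haK, rfl⟩)

end SRAux

namespace SRAux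
variable {k : Type*} [CommRing k] {m : ℕ}

theorem mem_PPhat_iff {K : Set (Finset (Fin m))} (g : (σ : K) → MvPolynomial (Fin m) k) :
    g ∈ PPhat k K ↔
      (∀ σ : K, g σ ∈ MvPolynomial.supported k ((σ : Finset (Fin m)) : Set (Fin m))) ∧
      (∀ σ τ : K, (τ : Finset (Fin m)) ⊆ (σ : Finset (Fin m)) →
        g τ = restrictFace k (τ : Finset (Fin m)) (g σ)) := by
  simp only [PPhat, Algebra.mem_inf, Algebra.mem_iInf, Subalgebra.mem_comap,
    AlgHom.mem_equalizer, Pi.evalAlgHom_apply, AlgHom.coe_comp, Function.comp_apply]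

theorem coeff_eq_zero_of_supported {σ : Finset (Fin m)} {p : MvPolynomial (Fin m) k}
    (hp : p ∈ MvPolynomial.supported k (σ : Set (Fin m))) {a : Fin m →₀ ℕ}
    (ha : ¬ a.support ⊆ σ) : coeff a p = 0 := by
  by_contra h
  obtain ⟨i, hi, hiσ⟩ := Finset.not_subset.mp ha
  have : i ∈ p.vars := (mem_vars i).mpr ⟨a, Finsupp.mem_support_iff.mpr h, hi⟩
  exact hiσ (MvPolynomial.mem_supported.mp hp this)

theorem range_alpha_mem (K : Set (Finset (Fin m))) (h : MvPolynomial (Fin m) k) :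
    alphaMap k K h ∈ PPhat k K := by
  rw [mem_PPhat_iff]
  constructor
  · intro σ
    rw [MvPolynomial.mem_supported]
    intro i hi
    obtain ⟨a, ha, hia⟩ := (mem_vars i).mp hi
    have : coeff a (restrictFace k (σ : Finset (Fin m)) h) ≠ 0 :=
      MvPolynomial.mem_support_iff.mp ha
    rw [coeff_restrictFace] at this
    split_ifs at this with hs
    · exact hs hia
    · exact absurd rfl this
  · intro σ τ hτσ
    show restrictFace k _ h = restrictFace k _ (restrictFace k _ h)
    ext a
    rw [coeff_restrictFace, coeff_restrictFace, coeff_restrictFace]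
    split_ifs with h1 h2 h2 <;> first | rfl | (exact absurd (h1.trans hτσ) h2)

theorem exists_preimage {K : Set (Finset (Fin m))}
    (hdown : ∀ σ ∈ K, ∀ τ, τ ⊆ σ → τ ∈ K)
    (g : (σ : K) → MvPolynomial (Fin m) k) (hg : g ∈ PPhat k K) :
    ∃ h : MvPolynomial (Fin m) k, alphaMap k K h = g := by
  classical
  obtain ⟨hsupp, hcompat⟩ := (mem_PPhat_iff g).mp hg
  haveI : Fintype K := Fintype.ofFinite K
  set h : MvPolynomial (Fin m) k :=
    ∑ σ : K, ∑ b ∈ (g σ).support.filter (fun b => b.support = (σ : Finset (Fin m))),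
      monomial b (coeff b (g σ)) with hh
  have hcoeff : ∀ a : Fin m →₀ ℕ, ∀ hK : a.support ∈ K,
      coeff a h = coeff a (g ⟨a.support, hK⟩) := by
    intro a hK
    rw [hh, coeff_sum]
    rw [Finset.sum_eq_single (⟨a.support, hK⟩ : K)]
    · rw [coeff_sum]
      rw [Finset.sum_eq_single a]
      · rw [coeff_monomial, if_pos rfl]
      · intro b _ hba
        rw [coeff_monomial, if_neg hba]
      · intro hnot
        rw [Finset.mem_filter, not_and] at hnot
        by_cases hmem : a ∈ (g ⟨a.support, hK⟩).support
        · exact absurd rfl (hnot hmem)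
        · rw [coeff_monomial, if_pos rfl,
            MvPolynomial.notMem_support_iff.mp hmem]
    · intro σ _ hσ
      rw [coeff_sum]
      refine Finset.sum_eq_zero fun b hb => ?_
      rw [coeff_monomial, if_neg]
      rintro rfl
      exact hσ (Subtype.ext (Finset.mem_filter.mp hb).2.symm)
    · intro hnot
      exact absurd (Finset.mem_univ _) hnot
  have hcoeff0 : ∀ a : Fin m →₀ ℕ, a.support ∉ K → coeff a h = 0 := by
    intro a hK
    rw [hh, coeff_sum]
    refine Finset.sum_eq_zero fun σ _ => ?_
    rw [coeff_sum]
    refine Finset.sum_eq_zero fun b hb => ?_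
    rw [coeff_monomial, if_neg]
    rintro rfl
    exact hK ((Finset.mem_filter.mp hb).2 ▸ σ.2)
  refine ⟨h, funext fun τ => ?_⟩
  show restrictFace k (τ : Finset (Fin m)) h = g τ
  ext a
  rw [coeff_restrictFace]
  split_ifs with ha
  · have haK : a.support ∈ K := hdown _ τ.2 _ ha
    rw [hcoeff a haK, hcompat τ ⟨a.support, haK⟩ ha, coeff_restrictFace, if_pos (Finset.Subset.refl _)]
  · exact (coeff_eq_zero_of_supported (hsupp τ) ha).symm

theorem mem_ker_alpha_iff {K : Set (Finset (Fin m))}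
    (hdown : ∀ σ ∈ K, ∀ τ, τ ⊆ σ → τ ∈ K) (p : MvPolynomial (Fin m) k) :
    p ∈ RingHom.ker (alphaMap k K) ↔
      ∀ a : Fin m →₀ ℕ, a.support ∈ K → coeff a p = 0 := by
  rw [RingHom.mem_ker]
  constructor
  · intro hp a ha
    have h1 : alphaMap k K p ⟨a.support, ha⟩ = 0 := by rw [hp]; rfl
    have h2 : coeff a (restrictFace k a.support p) = 0 := by
      rw [show restrictFace k a.support p = alphaMap k K p ⟨a.support, ha⟩ from rfl, h1,
        coeff_zero]
    rwa [coeff_restrictFace, if_pos (Finset.Subset.refl _)] at h2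
  · intro hp
    funext σ
    show restrictFace k (σ : Finset (Fin m)) p = 0
    ext a
    rw [coeff_restrictFace, coeff_zero]
    split_ifs with ha
    · exact hp a (hdown _ σ.2 _ ha)
    · rfl

end SRAux


open SRAux in
/-- For a simplicial complex `K` on `{1,…,m}` that is pure of rank `n`, the restriction
map `α : h ↦ (h|_σ)_{σ ∈ K}` is a surjection of `k`-algebras onto `PP[K̂;k]` whose kernel
is exactly the Stanley–Reisner ideal `I_K`; consequently it induces an isomorphism of
`k`-algebras `k[K] = k[x_1,…,x_m]/I_K ≅ PP[K̂;k]`. -/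
theorem stanleyReisner_iso_piecewisePolynomials
    (k : Type*) [CommRing k] (m n : ℕ) (K : Set (Finset (Fin m)))
    (hK : IsSimplicialComplex K) (hpure : IsPureOfRank K n) :
    Set.range (alphaMap k K) = (PPhat k K : Set ((σ : K) → MvPolynomial (Fin m) k)) ∧
    RingHom.ker (alphaMap k K) = stanleyReisnerIdeal k K ∧
    Nonempty ((MvPolynomial (Fin m) k ⧸ stanleyReisnerIdeal k K) ≃ₐ[k] PPhat k K) := by
  obtain ⟨-, hdown⟩ := hK
  have hrange : Set.range (alphaMap k K) = (PPhat k K : Set _) := by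
    ext g
    constructor
    · rintro ⟨h, rfl⟩; exact range_alpha_mem K h
    · intro hg; exact exists_preimage hdown g hg
  have hker : RingHom.ker (alphaMap k K) = stanleyReisnerIdeal k K := by
    ext p
    rw [mem_ker_alpha_iff hdown, mem_SR_iff hdown]
  refine ⟨hrange, hker, ?_⟩
  let β : MvPolynomial (Fin m) k →ₐ[k] PPhat k K :=
    (alphaMap k K).codRestrict (PPhat k K) (range_alpha_mem K)
  have hβsurj : Function.Surjective β := by
    rintro ⟨g, hg⟩
    obtain ⟨h, rfl⟩ := exists_preimage hdown g hg
    exact ⟨h, rfl⟩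
  have hβker : RingHom.ker β = stanleyReisnerIdeal k K := by
    rw [← hker]
    ext p
    simp only [RingHom.mem_ker]
    constructor
    · intro hp
      have := congrArg Subtype.val hp
      exact this
    · intro hp
      exact Subtype.ext hp
  exact ⟨(Ideal.quotientEquivAlgOfEq k hβker.symm).trans
    (Ideal.quotientKerAlgEquivOfSurjective hβsurj)⟩
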